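/- arXiv:0908.1230 — 4 statements merged into one kernel-verified Lean document; each statement's English description precedes it below -/
import Mathlib

section
/- Let T > 0, σ > 0, λ > 0 and κ₁ > 0. Let ρ, κ, G, c, g be continuous real-valued functions on [0,1]×[0,T] with ρ ≥ 0, κ ≥ κ₁, c ≥ 0 and g ≥ 0, and let p_s : ℝ → [0,∞) be continuous with p_s(θ) = 0 for θ ≤ 0. Let β⁰, β¹ > 0 and h⁰, h¹ ≥ 0 be constants. Suppose θ is continuous on [0,1]×[0,T], twice continuously differentiable in x and once in t on [0,1]×(0,T], and satisfies (ρ + σ)θ_t = (κ θ_x)_x + G θ_x + c θ − (λ + θ) p_s(θ) + g on (0,1)×(0,T], with boundary conditions (κ θ_x)(1,t) = β¹(h¹ − θ(1,t)) and (κ θ_x)(0,t) = β⁰(θ(0,t) − h⁰) for t ∈ (0,T], and θ(x,0) ≥ 0 for all x ∈ [0,1]. Then θ(x,t) ≥ 0 for all (x,t) ∈ [0,1]×[0,T]. -/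
open Set Filter MeasureTheory Topology

set_option maxHeartbeats 1000000

set_option maxHeartbeats 1000000
open Set Filter Topology

lemma aux_left {f : ℝ → ℝ} {d a b : ℝ} (hab : b < a) (hd : HasDerivAt f d a)
    (hmin : ∀ y ∈ Ioo b a, f a ≤ f y) : d ≤ 0 := by
  haveI : (𝓝[Ioo b a] a).NeBot := by
    apply mem_closure_iff_nhdsWithin_neBot.mp
    rw [closure_Ioo hab.ne]
    exact right_mem_Icc.mpr hab.le
  have ht : Tendsto (slope f a) (𝓝[Ioo b a] a) (𝓝 d) :=
    (hasDerivAt_iff_tendsto_slope.mp hd).mono_left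
      (nhdsWithin_mono a (fun y hy => ne_of_lt hy.2))
  refine le_of_tendsto ht ?_
  filter_upwards [self_mem_nhdsWithin] with y hy
  rw [slope_def_field]
  apply div_nonpos_of_nonneg_of_nonpos
  · exact sub_nonneg.mpr (hmin y hy)
  · linarith [hy.2]

lemma aux_right {f : ℝ → ℝ} {d a b : ℝ} (hab : a < b) (hd : HasDerivAt f d a)
    (hmin : ∀ y ∈ Ioo a b, f a ≤ f y) : 0 ≤ d := by
  haveI : (𝓝[Ioo a b] a).NeBot := by
    apply mem_closure_iff_nhdsWithin_neBot.mp
    rw [closure_Ioo hab.ne]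
    exact left_mem_Icc.mpr hab.le
  have ht : Tendsto (slope f a) (𝓝[Ioo a b] a) (𝓝 d) :=
    (hasDerivAt_iff_tendsto_slope.mp hd).mono_left
      (nhdsWithin_mono a (fun y hy => (ne_of_lt hy.1).symm))
  refine ge_of_tendsto ht ?_
  filter_upwards [self_mem_nhdsWithin] with y hy
  rw [slope_def_field]
  apply div_nonneg
  · exact sub_nonneg.mpr (hmin y hy)
  · linarith [hy.1]



theorem temperature_nonnegativity
    (T σ lam κ₁ β0 β1 hbar0 hbar1 : ℝ)
    (hT : 0 < T) (hσ : 0 < σ) (hlam : 0 < lam) (hκ₁ : 0 < κ₁)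
    (hβ0 : 0 < β0) (hβ1 : 0 < β1) (hhbar0 : 0 ≤ hbar0) (hhbar1 : 0 ≤ hbar1)
    (ρ κ G c g : ℝ → ℝ → ℝ) (θ : ℝ → ℝ → ℝ) (p_s : ℝ → ℝ)
    (h1 : ContinuousOn (fun p : ℝ × ℝ => ρ p.1 p.2) (Set.Icc 0 1 ×ˢ Set.Icc 0 T))
    (h2 : ContinuousOn (fun p : ℝ × ℝ => κ p.1 p.2) (Set.Icc 0 1 ×ˢ Set.Icc 0 T))
    (h3 : ContinuousOn (fun p : ℝ × ℝ => G p.1 p.2) (Set.Icc 0 1 ×ˢ Set.Icc 0 T))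
    (h4 : ContinuousOn (fun p : ℝ × ℝ => c p.1 p.2) (Set.Icc 0 1 ×ˢ Set.Icc 0 T))
    (h5 : ContinuousOn (fun p : ℝ × ℝ => g p.1 p.2) (Set.Icc 0 1 ×ˢ Set.Icc 0 T))
    (h6 : (∀ x ∈ Set.Icc (0:ℝ) 1, ∀ t ∈ Set.Icc (0:ℝ) T, 0 ≤ ρ x t))
    (h7 : (∀ x ∈ Set.Icc (0:ℝ) 1, ∀ t ∈ Set.Icc (0:ℝ) T, κ₁ ≤ κ x t))
    (h8 : (∀ x ∈ Set.Icc (0:ℝ) 1, ∀ t ∈ Set.Icc (0:ℝ) T, 0 ≤ c x t))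
    (h9 : (∀ x ∈ Set.Icc (0:ℝ) 1, ∀ t ∈ Set.Icc (0:ℝ) T, 0 ≤ g x t))
    (h10 : Continuous p_s)
    (h11 : (∀ s, 0 ≤ p_s s))
    (h12 : (∀ s ≤ (0:ℝ), p_s s = 0))
    (h13 : ContinuousOn (fun p : ℝ × ℝ => θ p.1 p.2) (Set.Icc 0 1 ×ˢ Set.Icc 0 T))
    (h14 : (∀ t ∈ Set.Ioc (0:ℝ) T, ContDiffOn ℝ 2 (fun x => θ x t) (Set.Icc 0 1)))
    (h15 : (∀ x ∈ Set.Icc (0:ℝ) 1, ∀ t ∈ Set.Ioc (0:ℝ) T, DifferentiableAt ℝ (fun s => θ x s) t))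
    (h16 : (∀ x ∈ Set.Ioo (0:ℝ) 1, ∀ t ∈ Set.Ioc (0:ℝ) T,
      (ρ x t + σ) * deriv (fun s => θ x s) t
      = deriv (fun y => κ y t * deriv (fun z => θ z t) y) x
        + G x t * deriv (fun z => θ z t) x
        + c x t * θ x t - (lam + θ x t) * p_s (θ x t) + g x t))
    (h17 : (∀ t ∈ Set.Ioc (0:ℝ) T,
      κ 1 t * deriv (fun z => θ z t) 1 = β1 * (hbar1 - θ 1 t)))
    (h18 : (∀ t ∈ Set.Ioc (0:ℝ) T,
      κ 0 t * deriv (fun z => θ z t) 0 = β0 * (θ 0 t - hbar0)))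
    (h19 : (∀ x ∈ Set.Icc (0:ℝ) 1, 0 ≤ θ x 0))
    :
    ∀ x ∈ Set.Icc (0:ℝ) 1, ∀ t ∈ Set.Icc (0:ℝ) T, 0 ≤ θ x t := by
  by_contra hcon
  push_neg at hcon
  obtain ⟨x1, hx1, t1, ht1, hneg⟩ := hcon
  have hQc : IsCompact (Set.Icc (0:ℝ) 1 ×ˢ Set.Icc (0:ℝ) T) :=
    isCompact_Icc.prod isCompact_Icc
  have hQne : (Set.Icc (0:ℝ) 1 ×ˢ Set.Icc (0:ℝ) T).Nonempty := ⟨(x1, t1), ⟨hx1, ht1⟩⟩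
  obtain ⟨pc, hpc, hpcmax⟩ := hQc.exists_isMaxOn hQne h4
  set K : ℝ := (max (c pc.1 pc.2) 0 + 1) / σ with hKdef
  have hK : 0 < K := by
    apply div_pos _ hσ
    have := le_max_right (c pc.1 pc.2) 0
    linarith
  have hσK : σ * K = max (c pc.1 pc.2) 0 + 1 := by
    rw [hKdef]; field_simp
  have hcK : ∀ x ∈ Set.Icc (0:ℝ) 1, ∀ t ∈ Set.Icc (0:ℝ) T, c x t < σ * K := by
    intro x hx t ht
    have h1 : c x t ≤ c pc.1 pc.2 := hpcmax (Set.mk_mem_prod hx ht)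
    have h2 := le_max_left (c pc.1 pc.2) 0
    linarith
  -- minimum of w = exp(-K t) θ
  have hwc : ContinuousOn (fun p : ℝ × ℝ => Real.exp (-K * p.2) * θ p.1 p.2)
      (Set.Icc 0 1 ×ˢ Set.Icc 0 T) :=
    ((Real.continuous_exp.comp (continuous_const.mul continuous_snd)).continuousOn).mul h13
  obtain ⟨⟨x0, t0⟩, hmQ, hmin'⟩ := hQc.exists_isMinOn hQne hwc
  have hmin : ∀ p ∈ Set.Icc (0:ℝ) 1 ×ˢ Set.Icc (0:ℝ) T,
      Real.exp (-K * t0) * θ x0 t0 ≤ Real.exp (-K * p.2) * θ p.1 p.2 :=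
    fun p hp => hmin' hp
  have hx0 : x0 ∈ Set.Icc (0:ℝ) 1 := hmQ.1
  have ht0 : t0 ∈ Set.Icc (0:ℝ) T := hmQ.2
  have hwneg : Real.exp (-K * t0) * θ x0 t0 < 0 := by
    have h1 : Real.exp (-K * t0) * θ x0 t0 ≤ Real.exp (-K * t1) * θ x1 t1 :=
      hmin (x1, t1) (Set.mk_mem_prod hx1 ht1)
    have := mul_neg_of_pos_of_neg (Real.exp_pos (-K * t1)) hneg
    linarith
  have hθ0 : θ x0 t0 < 0 := by
    by_contra h
    push_neg at h
    exact absurd (mul_nonneg (Real.exp_pos (-K * t0)).le h) (not_le.mpr hwneg)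
  have ht0pos : 0 < t0 := by
    rcases ht0.1.lt_or_eq with h | h
    · exact h
    · exfalso
      have h0 : 0 ≤ θ x0 t0 := by rw [← h]; exact h19 x0 hx0
      linarith
  have ht0Ioc : t0 ∈ Set.Ioc (0:ℝ) T := ⟨ht0pos, ht0.2⟩
  have hE := Real.exp_pos (-K * t0)
  -- min in x at time t0
  have hminx : ∀ y ∈ Set.Icc (0:ℝ) 1, θ x0 t0 ≤ θ y t0 := by
    intro y hy
    have h1 : Real.exp (-K * t0) * θ x0 t0 ≤ Real.exp (-K * t0) * θ y t0 :=
      hmin (y, t0) (Set.mk_mem_prod hy ht0)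
    exact (mul_le_mul_iff_right₀ hE).mp h1
  -- time derivative bound
  set Dt := deriv (fun s => θ x0 s) t0 with hDtdef
  have hdt : DifferentiableAt ℝ (fun s => θ x0 s) t0 := h15 x0 hx0 t0 ht0Ioc
  have hu : HasDerivAt (fun s => Real.exp (-K * s) * θ x0 s)
      (Real.exp (-K * t0) * (-K) * θ x0 t0 + Real.exp (-K * t0) * Dt) t0 := by
    have hexp : HasDerivAt (fun s : ℝ => Real.exp (-K * s)) (Real.exp (-K * t0) * (-K)) t0 := by
      have := ((hasDerivAt_id t0).const_mul (-K)).exp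
      simpa using this
    exact hexp.mul hdt.hasDerivAt
  have hdle : Real.exp (-K * t0) * (-K) * θ x0 t0 + Real.exp (-K * t0) * Dt ≤ 0 := by
    apply aux_left ht0pos hu
    intro s hs
    exact hmin (x0, s) (Set.mk_mem_prod hx0 ⟨hs.1.le, hs.2.le.trans ht0.2⟩)
  have hDtle : Dt ≤ K * θ x0 t0 := by nlinarith
  -- case split on x0
  rcases hx0.1.lt_or_eq with h0 | h0
  · rcases hx0.2.lt_or_eq with h1x | h1x
    · -- interior case
      have hx0i : x0 ∈ Set.Ioo (0:ℝ) 1 := ⟨h0, h1x⟩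
      set f := fun z => θ z t0 with hfdef
      have hC2 : ContDiffOn ℝ 2 f (Set.Icc 0 1) := h14 t0 ht0Ioc
      have hC2' : ContDiffOn ℝ 2 f (Set.Ioo 0 1) := hC2.mono Set.Ioo_subset_Icc_self
      have hder1 : ContDiffOn ℝ 1 (deriv f) (Set.Ioo 0 1) :=
        hC2'.deriv_of_isOpen isOpen_Ioo (by norm_num)
      have hD2diff : DifferentiableAt ℝ (deriv f) x0 :=
        (hder1.differentiableOn one_ne_zero).differentiableAt (isOpen_Ioo.mem_nhds hx0i)
      set D2 := deriv (deriv f) x0 with hD2def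
      have hD2 : HasDerivAt (deriv f) D2 x0 := hD2diff.hasDerivAt
      have hlocmin : IsLocalMin f x0 :=
        Filter.eventually_of_mem (Icc_mem_nhds hx0i.1 hx0i.2) (fun y hy => hminx y hy)
      have hfx0 : deriv f x0 = 0 := hlocmin.deriv_eq_zero
      -- second derivative nonneg
      have hD2nonneg : 0 ≤ D2 := by
        by_contra hD2neg
        push_neg at hD2neg
        have hslope := hasDerivAt_iff_tendsto_slope.mp hD2
        have hev : ∀ᶠ y in 𝓝[≠] x0, slope (deriv f) x0 y < 0 :=
          hslope.eventually (Iio_mem_nhds hD2neg)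
        rw [eventually_nhdsWithin_iff] at hev
        rw [Metric.eventually_nhds_iff] at hev
        obtain ⟨δ, hδ, hball⟩ := hev
        set b := min (x0 + δ / 2) ((x0 + 1) / 2) with hbdef
        have hbx0 : x0 < b := by
          apply lt_min (by linarith) (by linarith [hx0i.2])
        have hb1 : b < 1 := by
          have := min_le_right (x0 + δ / 2) ((x0 + 1) / 2)
          linarith [hx0i.2]
        have hderneg : ∀ y ∈ Set.Ioo x0 b, deriv f y < 0 := by
          intro y hy
          have hyd : dist y x0 < δ := by
            rw [Real.dist_eq, abs_of_pos (by linarith [hy.1] : (0:ℝ) < y - x0)]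
            have := min_le_left (x0 + δ / 2) ((x0 + 1) / 2)
            have := hy.2
            simp only [hbdef] at this
            linarith [lt_of_lt_of_le hy.2 (min_le_left (x0 + δ / 2) ((x0 + 1) / 2))]
          have hyne : y ≠ x0 := ne_of_gt hy.1
          have := hball hyd hyne
          rw [slope_def_field, hfx0, sub_zero] at this
          have hypos : 0 < y - x0 := by linarith [hy.1]
          by_contra hcon2
          push_neg at hcon2
          have : 0 ≤ deriv f y / (y - x0) := div_nonneg hcon2 hypos.le
          linarith
        have hanti : StrictAntiOn f (Set.Icc x0 b) := by
          apply strictAntiOn_of_deriv_neg (convex_Icc _ _)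
          · exact hC2.continuousOn.mono (Set.Icc_subset_Icc hx0i.1.le hb1.le)
          · intro y hy
            rw [interior_Icc] at hy
            exact hderneg y hy
        have hlt : f b < f x0 :=
          hanti (Set.left_mem_Icc.mpr hbx0.le) (Set.right_mem_Icc.mpr hbx0.le) hbx0
        have hge : θ x0 t0 ≤ θ b t0 := hminx b ⟨by linarith [hx0i.1], hb1.le⟩
        simp only [hfdef] at hlt
        linarith
      -- derivative of the flux F = κ θ_x
      have hκcont : ContinuousAt (fun y => κ y t0) x0 := by
        have hcc : ContinuousOn (fun y => κ y t0) (Set.Icc 0 1) := by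
          apply h2.comp (Continuous.continuousOn (continuous_id.prodMk continuous_const))
          intro y hy
          exact Set.mk_mem_prod hy ht0
        exact hcc.continuousAt (Icc_mem_nhds hx0i.1 hx0i.2)
      have hslope2 : Tendsto (slope (deriv f) x0) (𝓝[≠] x0) (𝓝 D2) :=
        hasDerivAt_iff_tendsto_slope.mp hD2
      have hFtend : Tendsto (fun y => κ y t0 * slope (deriv f) x0 y) (𝓝[≠] x0)
          (𝓝 (κ x0 t0 * D2)) :=
        (hκcont.tendsto.mono_left nhdsWithin_le_nhds).mul hslope2
      have hF : HasDerivAt (fun y => κ y t0 * deriv f y) (κ x0 t0 * D2) x0 := by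
        rw [hasDerivAt_iff_tendsto_slope]
        apply hFtend.congr'
        filter_upwards [self_mem_nhdsWithin] with y hy
        have hyne : y - x0 ≠ 0 := sub_ne_zero.mpr hy
        rw [slope_def_field, slope_def_field, hfx0]
        field_simp
        ring
      have hpde := h16 x0 hx0i t0 ht0Ioc
      rw [← hfdef, ← hDtdef] at hpde
      rw [hF.deriv, hfx0, h12 (θ x0 t0) hθ0.le] at hpde
      have hκD2 : 0 ≤ κ x0 t0 * D2 :=
        mul_nonneg (le_trans hκ₁.le (h7 x0 hx0 t0 ht0)) hD2nonneg
      have hρ0 : 0 ≤ ρ x0 t0 := h6 x0 hx0 t0 ht0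
      have hg0 : 0 ≤ g x0 t0 := h9 x0 hx0 t0 ht0
      have hclt : c x0 t0 < σ * K := hcK x0 hx0 t0 ht0
      nlinarith [mul_le_mul_of_nonneg_left hDtle (add_nonneg hρ0 hσ.le),
        mul_nonpos_of_nonneg_of_nonpos (mul_nonneg hρ0 hK.le) hθ0.le,
        mul_neg_of_pos_of_neg (sub_pos.mpr hclt) hθ0]
    · -- x0 = 1
      rw [h1x] at hθ0 hminx
      have hbc := h17 t0 ht0Ioc
      have hκpos : 0 < κ 1 t0 := lt_of_lt_of_le hκ₁ (h7 1 (Set.right_mem_Icc.mpr zero_le_one) t0 ht0)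
      have hrpos : 0 < β1 * (hbar1 - θ 1 t0) := mul_pos hβ1 (by linarith)
      have hd1pos : 0 < deriv (fun z => θ z t0) 1 := by nlinarith
      have hdiff : DifferentiableAt ℝ (fun z => θ z t0) 1 := by
        by_contra hnd
        rw [deriv_zero_of_not_differentiableAt hnd] at hd1pos
        linarith
      have := aux_left zero_lt_one hdiff.hasDerivAt
        (fun y hy => hminx y ⟨hy.1.le, hy.2.le⟩)
      linarith
  · -- x0 = 0
    rw [← h0] at hθ0 hminx
    have hbc := h18 t0 ht0Ioc
    have hκpos : 0 < κ 0 t0 := lt_of_lt_of_le hκ₁ (h7 0 (Set.left_mem_Icc.mpr zero_le_one) t0 ht0)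
    have hrneg : β0 * (θ 0 t0 - hbar0) < 0 := mul_neg_of_pos_of_neg hβ0 (by linarith)
    have hd0neg : deriv (fun z => θ z t0) 0 < 0 := by nlinarith
    have hdiff : DifferentiableAt ℝ (fun z => θ z t0) 0 := by
      by_contra hnd
      rw [deriv_zero_of_not_differentiableAt hnd] at hd0neg
      linarith
    have := aux_right zero_lt_one hdiff.hasDerivAt
      (fun y hy => hminx y ⟨hy.1.le, hy.2.le⟩)
    linarith
end

section
/- Let T > 0, σ > 0, λ > 0, κ₁ > 0, β⁰ > 0, β¹ > 0. Let p_s : ℝ → [0,∞) be continuous and nondecreasing with p_s(θ) = 0 for θ ≤ 0 and lim_{s→0⁺} p_s(s)/s = 0. Then there exists δ₀ > 0, depending only on p_s, λ, σ and T, with the following property: let 0 < δ ≤ δ₀, let ρ, χ, κ, G be continuous functions on [0,1]×[0,T] with ρ ≥ 0, χ ≥ 0 and κ ≥ κ₁, and let θ be continuous on [0,1]×[0,T], twice continuously differentiable in x and once in t on [0,1]×(0,T], satisfying (ρ + σ)θ_t = (κ θ_x)_x + G θ_x + (λ + θ)(ρχ − p_s(θ)) on (0,1)×(0,T], with boundary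 conditions (κθ_x)(1,t) = β¹(θ̄¹ − θ(1,t)) and (κθ_x)(0,t) = β⁰(θ(0,t) − θ̄⁰) where θ̄⁰ ≥ δ and θ̄¹ ≥ δ, and θ(x,0) ≥ δ for all x ∈ [0,1]. Then θ(x,t) ≥ e^{−T}·δ for all (x,t) ∈ [0,1]×[0,T]. -/
open Set Filter MeasureTheory

set_option maxHeartbeats 1000000

private lemma deriv_nonneg_of_min_right {f : ℝ → ℝ} {a d : ℝ} (hf : HasDerivAt f d a)
    (h : ∀ᶠ y in nhdsWithin a (Set.Ioi a), f a ≤ f y) : 0 ≤ d := by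
  have hs : Tendsto (slope f a) (nhdsWithin a (Set.Ioi a)) (nhds d) :=
    (hasDerivAt_iff_tendsto_slope.1 hf).mono_left
      (nhdsWithin_mono _ fun y hy => ne_of_gt hy)
  refine ge_of_tendsto hs ?_
  filter_upwards [h, self_mem_nhdsWithin] with y hy hy'
  rw [slope_def_field]
  exact div_nonneg (sub_nonneg.2 hy) (sub_nonneg.2 (le_of_lt hy'))

private lemma deriv_nonpos_of_min_left {f : ℝ → ℝ} {a d : ℝ} (hf : HasDerivAt f d a)
    (h : ∀ᶠ y in nhdsWithin a (Set.Iio a), f a ≤ f y) : d ≤ 0 := by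
  have hs : Tendsto (slope f a) (nhdsWithin a (Set.Iio a)) (nhds d) :=
    (hasDerivAt_iff_tendsto_slope.1 hf).mono_left
      (nhdsWithin_mono _ fun y hy => ne_of_lt hy)
  refine le_of_tendsto hs ?_
  filter_upwards [h, self_mem_nhdsWithin] with y hy hy'
  rw [slope_def_field]
  exact div_nonpos_of_nonneg_of_nonpos (sub_nonneg.2 hy) (sub_nonpos.2 (le_of_lt hy'))

private lemma second_deriv_nonneg_at_interior_min {g : ℝ → ℝ} {x₀ : ℝ}
    (hg : ContDiffOn ℝ 2 g (Set.Ioo 0 1)) (hx : x₀ ∈ Set.Ioo (0:ℝ) 1)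
    (hmin : ∀ y ∈ Set.Ioo (0:ℝ) 1, g x₀ ≤ g y) :
    deriv g x₀ = 0 ∧ DifferentiableAt ℝ (deriv g) x₀ ∧ 0 ≤ deriv (deriv g) x₀ := by
  have hopen : IsOpen (Set.Ioo (0:ℝ) 1) := isOpen_Ioo
  have hnb : Set.Ioo (0:ℝ) 1 ∈ nhds x₀ := hopen.mem_nhds hx
  have hdg : ContDiffOn ℝ 1 (deriv g) (Set.Ioo 0 1) :=
    hg.deriv_of_isOpen hopen (by norm_num)
  have hdiff2 : DifferentiableAt ℝ (deriv g) x₀ :=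
    ((hdg.differentiableOn one_ne_zero).differentiableAt hnb)
  have hlocmin : IsLocalMin g x₀ := by
    filter_upwards [hnb] with y hy using hmin y hy
  have h1 : deriv g x₀ = 0 := hlocmin.deriv_eq_zero
  refine ⟨h1, hdiff2, ?_⟩
  by_contra hL
  push_neg at hL
  set L := deriv (deriv g) x₀ with hLdef
  have hdg2 : HasDerivAt (deriv g) L x₀ := hdiff2.hasDerivAt
  have hslope : Tendsto (slope (deriv g) x₀) (nhdsWithin x₀ (Set.Ioi x₀)) (nhds L) :=
    (hasDerivAt_iff_tendsto_slope.1 hdg2).mono_left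
      (nhdsWithin_mono _ fun y hy => ne_of_gt hy)
  have hev : ∀ᶠ y in nhdsWithin x₀ (Set.Ioi x₀),
      deriv g y < 0 ∧ y ∈ Set.Ioo (0:ℝ) 1 := by
    filter_upwards [hslope.eventually_lt_const hL, self_mem_nhdsWithin,
      Ioo_mem_nhdsGT_of_mem (show x₀ ∈ Set.Ico x₀ 1 from ⟨le_rfl, hx.2⟩)] with y hy hy' hy''
    refine ⟨?_, ⟨lt_trans hx.1 hy', hy''.2⟩⟩
    rw [slope_def_field, h1, sub_zero] at hy
    have hxy : (0:ℝ) < y - x₀ := sub_pos.2 hy'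
    by_contra hc
    push_neg at hc
    exact absurd hy (not_lt.2 (div_nonneg hc hxy.le))
  obtain ⟨u, hu, hsub⟩ := mem_nhdsGT_iff_exists_Ioc_subset.1 hev
  have huI : u ∈ Set.Ioo (0:ℝ) 1 := (hsub ⟨hu, le_rfl⟩).2
  have hIccsub : Set.Icc x₀ u ⊆ Set.Ioo (0:ℝ) 1 := fun y hy =>
    ⟨lt_of_lt_of_le hx.1 hy.1, lt_of_le_of_lt hy.2 huI.2⟩
  have hanti : StrictAntiOn g (Set.Icc x₀ u) := by
    apply strictAntiOn_of_deriv_neg (convex_Icc _ _)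
      ((hg.continuousOn).mono hIccsub)
    intro y hy
    rw [interior_Icc] at hy
    exact (hsub ⟨hy.1, hy.2.le⟩).1
  have : g u < g x₀ := hanti ⟨le_rfl, hu.le⟩ ⟨hu.le, le_rfl⟩ hu
  exact absurd (hmin u huI) (not_le.2 this)

theorem temperature_uniform_lower_bound
    (T σ lam : ℝ) (hT : 0 < T) (hσ : 0 < σ) (hlam : 0 < lam)
    (p_s : ℝ → ℝ) (hps_c : Continuous p_s) (hps_mono : Monotone p_s)
    (hps_nonneg : ∀ s, 0 ≤ p_s s) (hps_zero : ∀ s ≤ (0:ℝ), p_s s = 0)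
    (hps_lim : Filter.Tendsto (fun s => p_s s / s) (nhdsWithin 0 (Set.Ioi 0)) (nhds 0)) :
    ∃ δ₀ : ℝ, 0 < δ₀ ∧ ∀ (δ κ₁ β0 β1 θb0 θb1 : ℝ) (ρ χ κ G θ : ℝ → ℝ → ℝ),
      0 < δ →
      δ ≤ δ₀ →
      0 < κ₁ →
      0 < β0 →
      0 < β1 →
      δ ≤ θb0 →
      δ ≤ θb1 →
      ContinuousOn (fun p : ℝ × ℝ => ρ p.1 p.2) (Set.Icc 0 1 ×ˢ Set.Icc 0 T) →
      ContinuousOn (fun p : ℝ × ℝ => χ p.1 p.2) (Set.Icc 0 1 ×ˢ Set.Icc 0 T) →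
      ContinuousOn (fun p : ℝ × ℝ => κ p.1 p.2) (Set.Icc 0 1 ×ˢ Set.Icc 0 T) →
      ContinuousOn (fun p : ℝ × ℝ => G p.1 p.2) (Set.Icc 0 1 ×ˢ Set.Icc 0 T) →
      (∀ x ∈ Set.Icc (0:ℝ) 1, ∀ t ∈ Set.Icc (0:ℝ) T, 0 ≤ ρ x t) →
      (∀ x ∈ Set.Icc (0:ℝ) 1, ∀ t ∈ Set.Icc (0:ℝ) T, 0 ≤ χ x t) →
      (∀ x ∈ Set.Icc (0:ℝ) 1, ∀ t ∈ Set.Icc (0:ℝ) T, κ₁ ≤ κ x t) →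
      ContinuousOn (fun p : ℝ × ℝ => θ p.1 p.2) (Set.Icc 0 1 ×ˢ Set.Icc 0 T) →
      (∀ t ∈ Set.Ioc (0:ℝ) T, ContDiffOn ℝ 2 (fun x => θ x t) (Set.Icc 0 1)) →
      (∀ x ∈ Set.Icc (0:ℝ) 1, ∀ t ∈ Set.Ioc (0:ℝ) T, DifferentiableAt ℝ (fun s => θ x s) t) →
      (∀ x ∈ Set.Ioo (0:ℝ) 1, ∀ t ∈ Set.Ioc (0:ℝ) T,
      (ρ x t + σ) * deriv (fun s => θ x s) t
      = deriv (fun y => κ y t * deriv (fun z => θ z t) y) x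
        + G x t * deriv (fun z => θ z t) x
        + (lam + θ x t) * (ρ x t * χ x t - p_s (θ x t))) →
      (∀ t ∈ Set.Ioc (0:ℝ) T,
      κ 1 t * deriv (fun z => θ z t) 1 = β1 * (θb1 - θ 1 t)) →
      (∀ t ∈ Set.Ioc (0:ℝ) T,
      κ 0 t * deriv (fun z => θ z t) 0 = β0 * (θ 0 t - θb0)) →
      (∀ x ∈ Set.Icc (0:ℝ) 1, δ ≤ θ x 0) →
      ∀ x ∈ Set.Icc (0:ℝ) 1, ∀ t ∈ Set.Icc (0:ℝ) T, Real.exp (-T) * δ ≤ θ x t := by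
  -- choose δ₀ from the degeneracy of p_s at 0
  set q : ℝ := σ / (2 * (lam + 1)) with hq_def
  have hq : 0 < q := by
    apply div_pos hσ; positivity
  have hev : ∀ᶠ s in nhdsWithin 0 (Set.Ioi 0), p_s s / s < q :=
    hps_lim.eventually_lt_const hq
  obtain ⟨ε, hε, hsub⟩ := Metric.mem_nhdsWithin_iff.1 hev
  have hps_small : ∀ s : ℝ, 0 < s → s < ε → p_s s < q * s := by
    intro s hs hsε
    have hmem : s ∈ Metric.ball (0:ℝ) ε ∩ Set.Ioi 0 :=
      ⟨by simpa [Real.dist_eq, abs_of_pos hs] using hsε, hs⟩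
    have h2 := hsub hmem
    exact (div_lt_iff₀ hs).1 h2
  refine ⟨min 1 (ε / 2), by positivity, ?_⟩
  intro δ κ₁ β0 β1 θb0 θb1 ρ χ κ G θ hδ hδ₀ hκ₁ hβ0 hβ1 hθb0 hθb1 hρc hχc hκc hGc hρ0 hχ0
    hκlb hθc hθx hθt hpde hbc1 hbc0 hθ0
  have hδ1 : δ ≤ 1 := hδ₀.trans (min_le_left _ _)
  have hδε : δ < ε := lt_of_le_of_lt (hδ₀.trans (min_le_right _ _)) (by linarith)
  by_contra hcon
  push_neg at hcon
  obtain ⟨x₁, hx₁, t₁, ht₁, hlt⟩ := hcon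
  -- the "energy-weighted" temperature W p = e^t θ(x,t)
  set W : ℝ × ℝ → ℝ := fun p => Real.exp p.2 * θ p.1 p.2 with hW_def
  have hW1 : W (x₁, t₁) < δ := by
    have h2 : Real.exp t₁ * θ x₁ t₁ < Real.exp t₁ * (Real.exp (-T) * δ) :=
      mul_lt_mul_of_pos_left hlt (Real.exp_pos _)
    have h3 : Real.exp t₁ * Real.exp (-T) ≤ 1 := by
      rw [← Real.exp_add]
      exact Real.exp_le_one_iff.2 (by linarith [ht₁.2])
    have h4 : Real.exp t₁ * (Real.exp (-T) * δ) ≤ δ := by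
      nlinarith [hδ.le]
    simpa [hW_def] using lt_of_lt_of_le h2 h4
  set c : ℝ := min δ (δ - W (x₁, t₁)) / 2 with hc_def
  have hcpos : 0 < c := by
    apply div_pos _ (by norm_num)
    exact lt_min hδ (by linarith)
  have hc2δ : 2 * c ≤ δ := by
    have := min_le_left δ (δ - W (x₁, t₁))
    rw [hc_def]; linarith
  have hW1c : W (x₁, t₁) ≤ δ - c := by
    have := min_le_right δ (δ - W (x₁, t₁))
    rw [hc_def] at *; linarith
  -- the set where W drops to level δ - c, and its earliest time
  set K : Set (ℝ × ℝ) := Set.Icc 0 1 ×ˢ Set.Icc 0 T with hK_def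
  have hWc : ContinuousOn W K :=
    ((Real.continuous_exp.comp continuous_snd).continuousOn).mul hθc
  set S : Set (ℝ × ℝ) := K ∩ W ⁻¹' (Set.Iic (δ - c)) with hS_def
  have hKcomp : IsCompact K := isCompact_Icc.prod isCompact_Icc
  have hKclosed : IsClosed K := (isClosed_Icc).prod isClosed_Icc
  have hSclosed : IsClosed S := hWc.preimage_isClosed_of_isClosed hKclosed isClosed_Iic
  have hScomp : IsCompact S := hKcomp.of_isClosed_subset hSclosed Set.inter_subset_left
  have hSne : S.Nonempty := ⟨(x₁, t₁), ⟨Set.mk_mem_prod hx₁ ht₁, hW1c⟩⟩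
  obtain ⟨⟨x₂, t₂⟩, hp₂S, hp₂min⟩ := hScomp.exists_isMinOn hSne continuous_snd.continuousOn
  have hx₂ : x₂ ∈ Set.Icc (0:ℝ) 1 := hp₂S.1.1
  have ht₂mem : t₂ ∈ Set.Icc (0:ℝ) T := hp₂S.1.2
  have hW2 : W (x₂, t₂) ≤ δ - c := hp₂S.2
  have hbefore : ∀ x ∈ Set.Icc (0:ℝ) 1, ∀ t : ℝ, 0 ≤ t → t < t₂ → δ - c < W (x, t) := by
    intro x hx t ht0 htt₂
    by_contra hle
    push_neg at hle
    have hmem : (x, t) ∈ S :=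
      ⟨Set.mk_mem_prod hx ⟨ht0, le_trans htt₂.le ht₂mem.2⟩, hle⟩
    have := isMinOn_iff.1 hp₂min (x, t) hmem
    simp only at this
    exact absurd this (not_le.2 htt₂)
  have ht₂pos : 0 < t₂ := by
    rcases (ht₂mem.1).lt_or_eq with h | h
    · exact h
    · exfalso
      have h0 : W (x₂, 0) = θ x₂ 0 := by simp [hW_def]
      have := hθ0 x₂ hx₂
      rw [← h] at hW2
      rw [h0] at hW2
      linarith
  have ht₂Ioc : t₂ ∈ Set.Ioc 0 T := ⟨ht₂pos, ht₂mem.2⟩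
  have hattime : ∀ x ∈ Set.Icc (0:ℝ) 1, δ - c ≤ W (x, t₂) := by
    intro x hx
    have hcont : ContinuousOn (fun t => W (x, t)) (Set.Icc 0 T) := by
      apply hWc.comp (Continuous.continuousOn (continuous_const.prodMk continuous_id))
      exact fun t ht => Set.mk_mem_prod hx ht
    have h1 : Tendsto (fun t => W (x, t)) (nhdsWithin t₂ (Set.Ioo 0 t₂)) (nhds (W (x, t₂))) :=
      (hcont.continuousWithinAt ht₂mem).mono_left
        (nhdsWithin_mono _ fun t ht => ⟨ht.1.le, le_trans ht.2.le ht₂mem.2⟩)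
    rw [nhdsWithin_Ioo_eq_nhdsLT ht₂pos] at h1
    refine ge_of_tendsto h1 ?_
    filter_upwards [Ioo_mem_nhdsLT_of_mem (show t₂ ∈ Set.Ioc 0 t₂ from ⟨ht₂pos, le_rfl⟩)]
      with t ht
    exact (hbefore x hx t ht.1.le ht.2).le
  have hWeq : W (x₂, t₂) = δ - c := le_antisymm hW2 (hattime x₂ hx₂)
  have hWsimp : Real.exp t₂ * θ x₂ t₂ = δ - c := hWeq
  have hδc : 0 < δ - c := by linarith
  have hθ₂pos : 0 < θ x₂ t₂ := by
    nlinarith [Real.exp_pos t₂]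
  have hexp1 : (1:ℝ) < Real.exp t₂ := Real.one_lt_exp_iff.2 ht₂pos
  have hθ₂δ : θ x₂ t₂ < δ := by nlinarith
  have hminx : ∀ y ∈ Set.Icc (0:ℝ) 1, θ x₂ t₂ ≤ θ y t₂ := by
    intro y hy
    have h := hattime y hy
    have h' : Real.exp t₂ * θ x₂ t₂ ≤ Real.exp t₂ * θ y t₂ := by
      rw [hWsimp]; exact h
    exact le_of_mul_le_mul_left h' (Real.exp_pos t₂)
  have hmint : ∀ t : ℝ, 0 ≤ t → t ≤ t₂ →
      Real.exp t₂ * θ x₂ t₂ ≤ Real.exp t * θ x₂ t := by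
    intro t h0 ht
    rcases ht.lt_or_eq with h | h
    · rw [hWsimp]
      exact (hbefore x₂ hx₂ t h0 h).le
    · rw [h]
  -- time derivative at (x₂, t₂)
  have hθtd := hθt x₂ hx₂ t₂ ht₂Ioc
  have hF : HasDerivAt (fun s => Real.exp s * θ x₂ s)
      (Real.exp t₂ * θ x₂ t₂ + Real.exp t₂ * deriv (fun s => θ x₂ s) t₂) t₂ :=
    (Real.hasDerivAt_exp t₂).mul hθtd.hasDerivAt
  have hFle : Real.exp t₂ * θ x₂ t₂ + Real.exp t₂ * deriv (fun s => θ x₂ s) t₂ ≤ 0 := by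
    refine deriv_nonpos_of_min_left hF ?_
    filter_upwards [Ioo_mem_nhdsLT_of_mem (show t₂ ∈ Set.Ioc 0 t₂ from ⟨ht₂pos, le_rfl⟩)]
      with t ht
    exact hmint t ht.1.le ht.2.le
  have hθt_le : deriv (fun s => θ x₂ s) t₂ ≤ -(θ x₂ t₂) := by
    nlinarith [Real.exp_pos t₂]
  -- spatial case analysis
  rcases eq_or_lt_of_le hx₂.1 with h0 | h0
  · -- x₂ = 0 : left boundary
    have hx0 : x₂ = 0 := h0.symm
    subst hx0
    have hκpos : 0 < κ 0 t₂ := lt_of_lt_of_le hκ₁ (hκlb 0 hx₂ t₂ ht₂mem)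
    have hbc := hbc0 t₂ ht₂Ioc
    have hrhs : β0 * (θ 0 t₂ - θb0) < 0 :=
      mul_neg_of_pos_of_neg hβ0 (by linarith)
    have hdneg : deriv (fun z => θ z t₂) 0 < 0 := by
      by_contra hc
      push_neg at hc
      have := mul_nonneg hκpos.le hc
      linarith
    have hdiff : DifferentiableAt ℝ (fun z => θ z t₂) 0 := by
      by_contra h
      rw [deriv_zero_of_not_differentiableAt h] at hdneg
      exact lt_irrefl 0 hdneg
    have h0le : 0 ≤ deriv (fun z => θ z t₂) 0 := by
      refine deriv_nonneg_of_min_right hdiff.hasDerivAt ?_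
      filter_upwards [Ioo_mem_nhdsGT_of_mem
        (show (0:ℝ) ∈ Set.Ico (0:ℝ) 1 from ⟨le_rfl, one_pos⟩)] with y hy
      exact hminx y (Set.Ioo_subset_Icc_self hy)
    linarith
  rcases eq_or_lt_of_le hx₂.2 with h1 | h1
  · -- x₂ = 1 : right boundary
    subst h1
    have hκpos : 0 < κ 1 t₂ := lt_of_lt_of_le hκ₁ (hκlb 1 hx₂ t₂ ht₂mem)
    have hbc := hbc1 t₂ ht₂Ioc
    have hrhs : 0 < β1 * (θb1 - θ 1 t₂) :=
      mul_pos hβ1 (by linarith)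
    have hdpos : 0 < deriv (fun z => θ z t₂) 1 := by
      by_contra hc
      push_neg at hc
      have := mul_nonpos_of_nonneg_of_nonpos hκpos.le hc
      linarith
    have hdiff : DifferentiableAt ℝ (fun z => θ z t₂) 1 := by
      by_contra h
      rw [deriv_zero_of_not_differentiableAt h] at hdpos
      exact lt_irrefl 0 hdpos
    have h0le : deriv (fun z => θ z t₂) 1 ≤ 0 := by
      refine deriv_nonpos_of_min_left hdiff.hasDerivAt ?_
      filter_upwards [Ioo_mem_nhdsLT_of_mem
        (show (1:ℝ) ∈ Set.Ioc (0:ℝ) 1 from ⟨one_pos, le_rfl⟩)] with y hy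
      exact hminx y (Set.Ioo_subset_Icc_self hy)
    linarith
  -- interior case
  have hxI : x₂ ∈ Set.Ioo (0:ℝ) 1 := ⟨h0, h1⟩
  have hCD : ContDiffOn ℝ 2 (fun z => θ z t₂) (Set.Ioo 0 1) :=
    (hθx t₂ ht₂Ioc).mono Set.Ioo_subset_Icc_self
  obtain ⟨hd0, hdiffdg, hL⟩ := second_deriv_nonneg_at_interior_min hCD hxI
    (fun y hy => hminx y (Set.Ioo_subset_Icc_self hy))
  set L : ℝ := deriv (deriv (fun z => θ z t₂)) x₂ with hLdef
  -- derivative of the flux κ θ_x at x₂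
  have hκcont : ContinuousAt (fun y => κ y t₂) x₂ := by
    have hcy : ContinuousOn (fun y => κ y t₂) (Set.Icc 0 1) := by
      apply hκc.comp (Continuous.continuousOn (continuous_id.prodMk continuous_const))
      exact fun y hy => Set.mk_mem_prod hy ht₂mem
    exact hcy.continuousAt (Icc_mem_nhds hxI.1 hxI.2)
  have hslopeg : Tendsto (slope (deriv (fun z => θ z t₂)) x₂)
      (nhdsWithin x₂ {x₂}ᶜ) (nhds L) :=
    hasDerivAt_iff_tendsto_slope.1 hdiffdg.hasDerivAt
  have hκt : Tendsto (fun y => κ y t₂) (nhdsWithin x₂ {x₂}ᶜ) (nhds (κ x₂ t₂)) :=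
    hκcont.continuousWithinAt
  have hmulslope : Tendsto (fun y => κ y t₂ * slope (deriv (fun z => θ z t₂)) x₂ y)
      (nhdsWithin x₂ {x₂}ᶜ) (nhds (κ x₂ t₂ * L)) := hκt.mul hslopeg
  have heq : ∀ y : ℝ, κ y t₂ * slope (deriv (fun z => θ z t₂)) x₂ y
      = slope (fun y => κ y t₂ * deriv (fun z => θ z t₂) y) x₂ y := by
    intro y
    simp only [slope_def_field, hd0]
    field_simp
    ring
  have hprod : HasDerivAt (fun y => κ y t₂ * deriv (fun z => θ z t₂) y)
      (κ x₂ t₂ * L) x₂ :=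
    hasDerivAt_iff_tendsto_slope.2 (hmulslope.congr heq)
  have hA : deriv (fun y => κ y t₂ * deriv (fun z => θ z t₂) y) x₂ = κ x₂ t₂ * L :=
    hprod.deriv
  have hpde2 := hpde x₂ hxI t₂ ht₂Ioc
  rw [hA, hd0] at hpde2
  -- assemble the contradiction
  have hρ2 := hρ0 x₂ hx₂ t₂ ht₂mem
  have hχ2 := hχ0 x₂ hx₂ t₂ ht₂mem
  have hκ2 : 0 < κ x₂ t₂ := lt_of_lt_of_le hκ₁ (hκlb x₂ hx₂ t₂ ht₂mem)
  have hAnn : 0 ≤ κ x₂ t₂ * L := mul_nonneg hκ2.le hL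
  have hθ₂1 : θ x₂ t₂ ≤ 1 := le_trans hθ₂δ.le hδ1
  have hpsb : p_s (θ x₂ t₂) < q * θ x₂ t₂ :=
    hps_small _ hθ₂pos (by linarith)
  have h4 : (lam + 1) * (q * θ x₂ t₂) = σ * θ x₂ t₂ / 2 := by
    rw [hq_def]; field_simp
  have hh1 : (lam + θ x₂ t₂) * p_s (θ x₂ t₂) ≤ (lam + 1) * (q * θ x₂ t₂) := by
    apply mul_le_mul (by linarith) hpsb.le (hps_nonneg _) (by linarith)
  have hh2 : 0 ≤ (lam + θ x₂ t₂) * (ρ x₂ t₂ * χ x₂ t₂) :=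
    mul_nonneg (by linarith) (mul_nonneg hρ2 hχ2)
  have hh3 : (ρ x₂ t₂ + σ) * deriv (fun s => θ x₂ s) t₂
      ≤ (ρ x₂ t₂ + σ) * (-(θ x₂ t₂)) :=
    mul_le_mul_of_nonneg_left hθt_le (by linarith)
  rw [mul_zero, add_zero, mul_sub] at hpde2
  have key1 : -(σ * θ x₂ t₂) / 2 ≤ (ρ x₂ t₂ + σ) * deriv (fun s => θ x₂ s) t₂ := by
    linarith only [hpde2, hAnn, hh2, hh1, h4]
  have key2 : (ρ x₂ t₂ + σ) * deriv (fun s => θ x₂ s) t₂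
      ≤ -(ρ x₂ t₂ * θ x₂ t₂) - σ * θ x₂ t₂ := by
    linarith only [hh3]
  linarith only [key1, key2, mul_nonneg hρ2 hθ₂pos.le, mul_pos hσ hθ₂pos]
end

section
/- Let T > 0, ε > 0. Let a be continuous with a ≥ 0 on [0,1]×[0,T], let b be continuous with continuous x-derivative on [0,1]×[0,T], let c ≥ 0 be continuous and bounded, and let f be continuous with f ≥ ε on [0,1]×[0,T]. Let α⁰, α¹ > 0 and r⁰ ≥ ε, r¹ ≥ ε. Suppose ρ is continuous on [0,1]×[0,T], twice continuously differentiable in x and once in t on [0,1]×(0,T], satisfies ρ_t = ((ε+a)ρ_x + bρ)_x − cρ + f on (0,1)×(0,T], with boundary conditions ((ε+a)ρ_x + bρ)(1,t) = α¹(r¹ − ρ(1,t)) and ((ε+a)ρ_x + bρ)(0,t) = α⁰(ρ(0,t) − r⁰), and ρ(x,0) ≥ ε for all x ∈ [0,1]. Then there exists a constant δ > 0, depending only on ε, α⁰, α¹, sup|b|, sup|b_x| and sup c, such that ρ(x,t) ≥ δ for all (x,t) ∈ [0,1]×[0,T]. -/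
open Set Filter MeasureTheory Topology

lemma aux_slope_min_right {g : ℝ → ℝ} {x z : ℝ} (hxz : x < z)
    (hmin : ∀ y ∈ Set.Ioc x z, g x ≤ g y) : 0 ≤ deriv g x := by
  by_cases hd : DifferentiableAt ℝ g x
  · have ht : Tendsto (slope g x) (𝓝[≠] x) (𝓝 (deriv g x)) :=
      hasDerivAt_iff_tendsto_slope.mp hd.hasDerivAt
    have ht' : Tendsto (slope g x) (𝓝[Set.Ioc x z] x) (𝓝 (deriv g x)) :=
      ht.mono_left (nhdsWithin_mono x (fun y hy => ne_of_gt hy.1))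
    haveI hne : (𝓝[Set.Ioc x z] x).NeBot := by
      rw [← mem_closure_iff_nhdsWithin_neBot, closure_Ioc hxz.ne]
      exact ⟨le_refl x, hxz.le⟩
    refine ge_of_tendsto ht' ?_
    filter_upwards [self_mem_nhdsWithin] with y hy
    rw [slope_def_field]
    exact div_nonneg (sub_nonneg.mpr (hmin y hy)) (sub_nonneg.mpr hy.1.le)
  · rw [deriv_zero_of_not_differentiableAt hd]

lemma aux_slope_min_left {g : ℝ → ℝ} {x z : ℝ} (hzx : z < x)
    (hmin : ∀ y ∈ Set.Ico z x, g x ≤ g y) : deriv g x ≤ 0 := by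
  by_cases hd : DifferentiableAt ℝ g x
  · have ht : Tendsto (slope g x) (𝓝[≠] x) (𝓝 (deriv g x)) :=
      hasDerivAt_iff_tendsto_slope.mp hd.hasDerivAt
    have ht' : Tendsto (slope g x) (𝓝[Set.Ico z x] x) (𝓝 (deriv g x)) :=
      ht.mono_left (nhdsWithin_mono x (fun y hy => ne_of_lt hy.2))
    haveI hne : (𝓝[Set.Ico z x] x).NeBot := by
      rw [← mem_closure_iff_nhdsWithin_neBot, closure_Ico hzx.ne]
      exact ⟨hzx.le, le_refl x⟩
    refine le_of_tendsto ht' ?_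
    filter_upwards [self_mem_nhdsWithin] with y hy
    rw [slope_def_field]
    exact div_nonpos_of_nonneg_of_nonpos (sub_nonneg.mpr (hmin y hy))
      (sub_nonpos.mpr hy.2.le)
  · rw [deriv_zero_of_not_differentiableAt hd]

lemma aux_second_deriv_nonneg {g : ℝ → ℝ} {x0 q d : ℝ} (hxq : x0 < q)
    (hdiff : ∀ y ∈ Set.Icc x0 q, DifferentiableAt ℝ g y)
    (h0 : deriv g x0 = 0)
    (hd : HasDerivAt (deriv g) d x0)
    (hmin : ∀ y ∈ Set.Icc x0 q, g x0 ≤ g y) : 0 ≤ d := by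
  by_contra hneg
  push_neg at hneg
  have ht : Tendsto (slope (deriv g) x0) (𝓝[>] x0) (𝓝 d) :=
    (hasDerivAt_iff_tendsto_slope.mp hd).mono_left
      (nhdsWithin_mono _ (fun y hy => ne_of_gt hy))
  have hev : ∀ᶠ y in 𝓝[>] x0, slope (deriv g) x0 y < 0 := ht.eventually_lt_const hneg
  obtain ⟨u, hu, hsub⟩ := mem_nhdsGT_iff_exists_Ioo_subset.mp hev
  set bb := (x0 + min q u) / 2 with hbb
  have hminqu : x0 < min q u := lt_min hxq hu
  have hbb1 : x0 < bb := by rw [hbb]; linarith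
  have hbb2 : bb < min q u := by rw [hbb]; linarith
  have hbbq : bb ≤ q := hbb2.le.trans (min_le_left _ _)
  have hsubIcc : Set.Icc x0 bb ⊆ Set.Icc x0 q := Set.Icc_subset_Icc le_rfl hbbq
  have hcont : ContinuousOn g (Set.Icc x0 bb) := fun y hy =>
    ((hdiff y (hsubIcc hy)).continuousAt).continuousWithinAt
  have hder : ∀ y ∈ Set.Ioo x0 bb, HasDerivAt g (deriv g y) y := fun y hy =>
    (hdiff y (hsubIcc ⟨hy.1.le, hy.2.le⟩)).hasDerivAt
  obtain ⟨cpt, hcpt, hceq⟩ := exists_hasDerivAt_eq_slope g (deriv g) hbb1 hcont hder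
  have hcptu : cpt ∈ Set.Ioo x0 u := ⟨hcpt.1, hcpt.2.trans (hbb2.trans_le (min_le_right _ _))⟩
  have hslope := hsub hcptu
  rw [Set.mem_setOf_eq] at hslope
  rw [slope_def_field, h0, sub_zero] at hslope
  have hcx : 0 < cpt - x0 := sub_pos.mpr hcpt.1
  have hdc : deriv g cpt < 0 := by
    by_contra hge
    push_neg at hge
    exact absurd (div_nonneg hge hcx.le) (not_le.mpr hslope)
  have hnum : 0 ≤ (g bb - g x0) / (bb - x0) :=
    div_nonneg (sub_nonneg.mpr (hmin bb ⟨hbb1.le, hbbq⟩)) (sub_nonneg.mpr hbb1.le)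
  rw [hceq] at hdc
  linarith

theorem density_uniform_lower_bound
    (ε α0 α1 B B' Cc : ℝ)
    (hε : 0 < ε) (hα0 : 0 < α0) (hα1 : 0 < α1)
    (hB : 0 ≤ B) (hB' : 0 ≤ B') (hCc : 0 ≤ Cc) :
    ∃ δ : ℝ, 0 < δ ∧ ∀ (T r0 r1 : ℝ) (a b c f ρ : ℝ → ℝ → ℝ),
      0 < T →
      ε ≤ r0 →
      ε ≤ r1 →
      ContinuousOn (fun p : ℝ × ℝ => a p.1 p.2) (Set.Icc 0 1 ×ˢ Set.Icc 0 T) →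
      (∀ x ∈ Set.Icc (0:ℝ) 1, ∀ t ∈ Set.Icc (0:ℝ) T, 0 ≤ a x t) →
      ContinuousOn (fun p : ℝ × ℝ => b p.1 p.2) (Set.Icc 0 1 ×ˢ Set.Icc 0 T) →
      ContinuousOn (fun p : ℝ × ℝ => deriv (fun y => b y p.2) p.1) (Set.Icc 0 1 ×ˢ Set.Icc 0 T) →
      (∀ t ∈ Set.Icc (0:ℝ) T, ∀ x ∈ Set.Icc (0:ℝ) 1, DifferentiableAt ℝ (fun y => b y t) x) →
      (∀ x ∈ Set.Icc (0:ℝ) 1, ∀ t ∈ Set.Icc (0:ℝ) T, |b x t| ≤ B) →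
      (∀ x ∈ Set.Icc (0:ℝ) 1, ∀ t ∈ Set.Icc (0:ℝ) T, |deriv (fun y => b y t) x| ≤ B') →
      ContinuousOn (fun p : ℝ × ℝ => c p.1 p.2) (Set.Icc 0 1 ×ˢ Set.Icc 0 T) →
      (∀ x ∈ Set.Icc (0:ℝ) 1, ∀ t ∈ Set.Icc (0:ℝ) T, 0 ≤ c x t) →
      (∀ x ∈ Set.Icc (0:ℝ) 1, ∀ t ∈ Set.Icc (0:ℝ) T, c x t ≤ Cc) →
      ContinuousOn (fun p : ℝ × ℝ => f p.1 p.2) (Set.Icc 0 1 ×ˢ Set.Icc 0 T) →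
      (∀ x ∈ Set.Icc (0:ℝ) 1, ∀ t ∈ Set.Icc (0:ℝ) T, ε ≤ f x t) →
      ContinuousOn (fun p : ℝ × ℝ => ρ p.1 p.2) (Set.Icc 0 1 ×ˢ Set.Icc 0 T) →
      (∀ t ∈ Set.Ioc (0:ℝ) T, ContDiffOn ℝ 2 (fun x => ρ x t) (Set.Icc 0 1)) →
      (∀ x ∈ Set.Icc (0:ℝ) 1, ∀ t ∈ Set.Ioc (0:ℝ) T, DifferentiableAt ℝ (fun s => ρ x s) t) →
      (∀ x ∈ Set.Ioo (0:ℝ) 1, ∀ t ∈ Set.Ioc (0:ℝ) T,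
      deriv (fun s => ρ x s) t
      = deriv (fun y => (ε + a y t) * deriv (fun z => ρ z t) y + b y t * ρ y t) x - c x t * ρ x t + f x t) →
      (∀ t ∈ Set.Ioc (0:ℝ) T,
      (ε + a 1 t) * deriv (fun z => ρ z t) 1 + b 1 t * ρ 1 t = α1 * (r1 - ρ 1 t)) →
      (∀ t ∈ Set.Ioc (0:ℝ) T,
      (ε + a 0 t) * deriv (fun z => ρ z t) 0 + b 0 t * ρ 0 t = α0 * (ρ 0 t - r0)) →
      (∀ x ∈ Set.Icc (0:ℝ) 1, ε ≤ ρ x 0) →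
      ∀ x ∈ Set.Icc (0:ℝ) 1, ∀ t ∈ Set.Icc (0:ℝ) T, δ ≤ ρ x t := by
  have hD1 : (0:ℝ) < B' + Cc + 1 := by linarith
  have hD2 : (0:ℝ) < α0 + B + 1 := by linarith
  have hD3 : (0:ℝ) < α1 + B + 1 := by linarith
  set δ : ℝ := (ε/2) * min (1/(B'+Cc+1)) (min (α0/(α0+B+1)) (α1/(α1+B+1))) with hδdef
  have hδpos : 0 < δ := by
    apply mul_pos (by linarith)
    exact lt_min (by positivity) (lt_min (by positivity) (by positivity))
  have hδ1 : (B' + Cc + 1) * δ ≤ ε/2 := by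
    have h := min_le_left (1/(B'+Cc+1)) (min (α0/(α0+B+1)) (α1/(α1+B+1)))
    have : δ ≤ (ε/2) * (1/(B'+Cc+1)) :=
      mul_le_mul_of_nonneg_left h (by linarith)
    rw [mul_one_div] at this
    calc (B' + Cc + 1) * δ ≤ (B' + Cc + 1) * ((ε/2)/(B'+Cc+1)) :=
          mul_le_mul_of_nonneg_left this hD1.le
      _ = ε/2 := by field_simp
  have hδ2 : (α0 + B + 1) * δ ≤ α0 * (ε/2) := by
    have h := (min_le_right (1/(B'+Cc+1)) _).trans
      (min_le_left (α0/(α0+B+1)) (α1/(α1+B+1)))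
    have : δ ≤ (ε/2) * (α0/(α0+B+1)) := mul_le_mul_of_nonneg_left h (by linarith)
    calc (α0 + B + 1) * δ ≤ (α0 + B + 1) * ((ε/2) * (α0/(α0+B+1))) :=
          mul_le_mul_of_nonneg_left this hD2.le
      _ = α0 * (ε/2) := by field_simp
  have hδ3 : (α1 + B + 1) * δ ≤ α1 * (ε/2) := by
    have h := (min_le_right (1/(B'+Cc+1)) _).trans
      (min_le_right (α0/(α0+B+1)) (α1/(α1+B+1)))
    have : δ ≤ (ε/2) * (α1/(α1+B+1)) := mul_le_mul_of_nonneg_left h (by linarith)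
    calc (α1 + B + 1) * δ ≤ (α1 + B + 1) * ((ε/2) * (α1/(α1+B+1))) :=
          mul_le_mul_of_nonneg_left this hD3.le
      _ = α1 * (ε/2) := by field_simp
  have hδε : δ < ε := by nlinarith
  refine ⟨δ, hδpos, ?_⟩
  intro T r0 r1 a b c f ρ hT hr0 hr1 ha hapos hb hbx hbdiff hBb hB'b hc hcpos hcB hf hfε
    hρ hρx hρt hPDE hbc1 hbc0 hinit x hx t ht
  by_contra hcon
  push_neg at hcon
  -- the bad set
  set S : Set (ℝ × ℝ) := (Set.Icc 0 1 ×ˢ Set.Icc 0 T) ∩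
    ((fun p : ℝ × ℝ => ρ p.1 p.2) ⁻¹' Set.Iic δ) with hSdef
  have hSclosed : IsClosed S :=
    hρ.preimage_isClosed_of_isClosed (isClosed_Icc.prod isClosed_Icc) isClosed_Iic
  have hScomp : IsCompact S :=
    IsCompact.of_isClosed_subset (isCompact_Icc.prod isCompact_Icc) hSclosed
      Set.inter_subset_left
  have hSne : S.Nonempty := ⟨(x, t), ⟨⟨hx, ht⟩, hcon.le⟩⟩
  obtain ⟨⟨x0, t0⟩, hmemS, hminS⟩ :=
    hScomp.exists_isMinOn hSne (continuous_snd.continuousOn)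
  have hminS' : ∀ p ∈ S, t0 ≤ p.2 := fun p hp => hminS hp
  have hx0 : x0 ∈ Set.Icc (0:ℝ) 1 := hmemS.1.1
  have ht0T : t0 ∈ Set.Icc (0:ℝ) T := hmemS.1.2
  have hρle : ρ x0 t0 ≤ δ := hmemS.2
  have ht0pos : 0 < t0 := by
    rcases lt_or_eq_of_le ht0T.1 with h | h
    · exact h
    · exfalso
      rw [← h] at hρle
      linarith [hinit x0 hx0]
  have ht0Ioc : t0 ∈ Set.Ioc (0:ℝ) T := ⟨ht0pos, ht0T.2⟩
  -- strictly above δ before time t0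
  have hgt : ∀ y ∈ Set.Icc (0:ℝ) 1, ∀ s ∈ Set.Ico (0:ℝ) t0, δ < ρ y s := by
    intro y hy s hs
    by_contra hle
    push_neg at hle
    have hmem : (y, s) ∈ S := ⟨⟨hy, ⟨hs.1, hs.2.le.trans ht0T.2⟩⟩, hle⟩
    exact absurd (hminS' _ hmem) (not_le.mpr hs.2)
  -- at time t0, everything is ≥ δ
  have hge : ∀ y ∈ Set.Icc (0:ℝ) 1, δ ≤ ρ y t0 := by
    intro y hy
    have hcomp : ContinuousOn (fun s => ρ y s) (Set.Icc 0 T) :=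
      hρ.comp ((continuous_const.prodMk continuous_id).continuousOn)
        (fun s hs => ⟨hy, hs⟩)
    haveI hneb : (𝓝[Set.Ico (0:ℝ) t0] t0).NeBot := by
      rw [← mem_closure_iff_nhdsWithin_neBot, closure_Ico (ne_of_lt ht0pos)]
      exact ⟨ht0pos.le, le_refl t0⟩
    have htend : Tendsto (fun s => ρ y s) (𝓝[Set.Ico (0:ℝ) t0] t0) (𝓝 (ρ y t0)) :=
      ((hcomp t0 ht0T).tendsto).mono_left
        (nhdsWithin_mono _ (fun s hs => ⟨hs.1, hs.2.le.trans ht0T.2⟩))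
    refine ge_of_tendsto htend ?_
    filter_upwards [self_mem_nhdsWithin] with s hs
    exact (hgt y hy s hs).le
  have hρeq : ρ x0 t0 = δ := le_antisymm hρle (hge x0 hx0)
  -- time derivative is nonpositive at (x0, t0)
  have hdt : deriv (fun s => ρ x0 s) t0 ≤ 0 := by
    apply aux_slope_min_left ht0pos
    intro s hs
    show ρ x0 t0 ≤ ρ x0 s
    rw [hρeq]
    exact (hgt x0 hx0 s hs).le
  rcases eq_or_lt_of_le hx0.1 with h0 | h0
  · -- x0 = 0 : boundary case at the left endpoint
    have hx00 : x0 = 0 := h0.symm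
    subst hx00
    have heq := hbc0 t0 ht0Ioc
    have hd0 : 0 ≤ deriv (fun z => ρ z t0) 0 := by
      apply aux_slope_min_right (show (0:ℝ) < 1 by norm_num)
      intro y hy
      show ρ 0 t0 ≤ ρ y t0
      rw [hρeq]
      exact hge y ⟨hy.1.le, hy.2⟩
    have ha0 : 0 ≤ a 0 t0 := hapos 0 (Set.left_mem_Icc.mpr zero_le_one) t0 ht0T
    have hb0 : -B ≤ b 0 t0 := (abs_le.mp (hBb 0 (Set.left_mem_Icc.mpr zero_le_one) t0 ht0T)).1
    rw [hρeq] at heq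
    have h1 : 0 ≤ (ε + a 0 t0) * deriv (fun z => ρ z t0) 0 :=
      mul_nonneg (by linarith) hd0
    have k1 : α0 * (δ - r0) ≤ α0 * (δ - ε) :=
      mul_le_mul_of_nonneg_left (by linarith) hα0.le
    have k2 : -B * δ ≤ b 0 t0 * δ := mul_le_mul_of_nonneg_right hb0 hδpos.le
    nlinarith [mul_pos hα0 hε, hδpos]
  rcases eq_or_lt_of_le hx0.2 with h1 | h1
  · -- x0 = 1 : boundary case at the right endpoint
    subst h1
    have heq := hbc1 t0 ht0Ioc
    have hd1 : deriv (fun z => ρ z t0) 1 ≤ 0 := by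
      apply aux_slope_min_left (show (0:ℝ) < 1 by norm_num)
      intro y hy
      show ρ 1 t0 ≤ ρ y t0
      rw [hρeq]
      exact hge y ⟨hy.1, hy.2.le⟩
    have ha1 : 0 ≤ a 1 t0 := hapos 1 (Set.right_mem_Icc.mpr zero_le_one) t0 ht0T
    have hb1 : b 1 t0 ≤ B := (abs_le.mp (hBb 1 (Set.right_mem_Icc.mpr zero_le_one) t0 ht0T)).2
    rw [hρeq] at heq
    have h1' : (ε + a 1 t0) * deriv (fun z => ρ z t0) 1 ≤ 0 :=
      mul_nonpos_of_nonneg_of_nonpos (by linarith) hd1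
    have k1 : α1 * (ε - δ) ≤ α1 * (r1 - δ) :=
      mul_le_mul_of_nonneg_left (by linarith) hα1.le
    have k2 : b 1 t0 * δ ≤ B * δ := mul_le_mul_of_nonneg_right hb1 hδpos.le
    nlinarith [mul_pos hα1 hε, hδpos]
  · -- interior case
    have hx0Ioo : x0 ∈ Set.Ioo (0:ℝ) 1 := ⟨h0, h1⟩
    have hIccN : Set.Icc (0:ℝ) 1 ∈ 𝓝 x0 := Icc_mem_nhds h0 h1
    have hgC2 : ContDiffOn ℝ 2 (fun y => ρ y t0) (Set.Icc 0 1) := hρx t0 ht0Ioc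
    have hgCA : ContDiffAt ℝ 2 (fun y => ρ y t0) x0 := hgC2.contDiffAt hIccN
    obtain ⟨u, huN, hu⟩ := hgCA.contDiffOn le_rfl (by simp)
    have hUo : IsOpen (interior u) := isOpen_interior
    have hxU : x0 ∈ interior u := mem_interior_iff_mem_nhds.mpr huN
    have hgU : ContDiffOn ℝ 2 (fun y => ρ y t0) (interior u) := hu.mono interior_subset
    have hgdiffU : ∀ y ∈ interior u, DifferentiableAt ℝ (fun z => ρ z t0) y := fun y hy =>
      (hgU.differentiableOn (by norm_num)).differentiableAt (hUo.mem_nhds hy)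
    have hg'U : ContDiffOn ℝ 1 (deriv (fun z => ρ z t0)) (interior u) :=
      hgU.deriv_of_isOpen hUo (by norm_num)
    have hg'diff : DifferentiableAt ℝ (deriv (fun z => ρ z t0)) x0 :=
      ((hg'U.differentiableOn (by norm_num)).differentiableAt (hUo.mem_nhds hxU))
    have hlocmin : IsLocalMin (fun y => ρ y t0) x0 := by
      filter_upwards [hIccN] with y hy
      show ρ x0 t0 ≤ ρ y t0
      rw [hρeq]
      exact hge y hy
    have hdzero : deriv (fun z => ρ z t0) x0 = 0 := hlocmin.deriv_eq_zero
    have hd2H : HasDerivAt (deriv (fun z => ρ z t0))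
        (deriv (deriv (fun z => ρ z t0)) x0) x0 := hg'diff.hasDerivAt
    -- second derivative nonneg at interior min
    obtain ⟨η, hη, hball⟩ := Metric.isOpen_iff.mp hUo x0 hxU
    set q := min 1 (x0 + η/2) with hq
    have hx0q : x0 < q := lt_min h1 (by linarith)
    have hsubU : Set.Icc x0 q ⊆ interior u := by
      intro y hy
      apply hball
      rw [Metric.mem_ball, Real.dist_eq, abs_lt]
      have hyq : y ≤ x0 + η/2 := hy.2.trans (min_le_right 1 (x0 + η/2))
      constructor
      · linarith [hy.1]
      · linarith
    have hsubI : Set.Icc x0 q ⊆ Set.Icc (0:ℝ) 1 := fun y hy =>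
      ⟨le_trans h0.le hy.1, le_trans hy.2 (min_le_left _ _)⟩
    have hd2nn : 0 ≤ deriv (deriv (fun z => ρ z t0)) x0 := by
      apply aux_second_deriv_nonneg hx0q (fun y hy => hgdiffU y (hsubU hy)) hdzero hd2H
      intro y hy
      show ρ x0 t0 ≤ ρ y t0
      rw [hρeq]
      exact hge y (hsubI hy)
    -- continuity of a in x at x0
    have hat0 : ContinuousAt (fun y => a y t0) x0 := by
      have hco : ContinuousOn (fun y => a y t0) (Set.Icc (0:ℝ) 1) :=
        ha.comp ((continuous_id.prodMk continuous_const).continuousOn)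
          (fun y hy => ⟨hy, ht0T⟩)
      exact hco.continuousAt hIccN
    have hPDE0 := hPDE x0 hx0Ioo t0 ht0Ioc
    -- lower bound for the divergence term
    have hdivF : -B' * δ ≤ deriv
        (fun y => (ε + a y t0) * deriv (fun z => ρ z t0) y + b y t0 * ρ y t0) x0 := by
      by_cases hFd : DifferentiableAt ℝ
        (fun y => (ε + a y t0) * deriv (fun z => ρ z t0) y + b y t0 * ρ y t0) x0
      · have hbx0 : DifferentiableAt ℝ (fun y => b y t0) x0 :=
          hbdiff t0 ht0T x0 hx0
        have hgx0 : DifferentiableAt ℝ (fun z => ρ z t0) x0 := hgdiffU x0 hxU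
        have hhd : DifferentiableAt ℝ (fun y => b y t0 * ρ y t0) x0 := hbx0.mul hgx0
        have hGd : DifferentiableAt ℝ (fun y => (ε + a y t0) * deriv (fun z => ρ z t0) y) x0 := by
          have hsub := hFd.sub hhd
          have heqf : (fun y => ((ε + a y t0) * deriv (fun z => ρ z t0) y + b y t0 * ρ y t0)
              - b y t0 * ρ y t0) = fun y => (ε + a y t0) * deriv (fun z => ρ z t0) y := by
            funext y; ring
          rw [← heqf]; exact hsub
        -- identify deriv G x0
        have ht1 : Tendsto (slope (fun y => (ε + a y t0) * deriv (fun z => ρ z t0) y) x0)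
            (𝓝[≠] x0)
            (𝓝 (deriv (fun y => (ε + a y t0) * deriv (fun z => ρ z t0) y) x0)) :=
          hasDerivAt_iff_tendsto_slope.mp hGd.hasDerivAt
        have ht2 : Tendsto (fun y => (ε + a y t0) * slope (deriv (fun z => ρ z t0)) x0 y)
            (𝓝[≠] x0) (𝓝 ((ε + a x0 t0) * deriv (deriv (fun z => ρ z t0)) x0)) := by
          apply Tendsto.mul
          · exact ((continuousAt_const.add hat0).tendsto).mono_left nhdsWithin_le_nhds
          · exact hasDerivAt_iff_tendsto_slope.mp hd2H
        have hfe : (fun y => (ε + a y t0) * slope (deriv (fun z => ρ z t0)) x0 y)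
            = slope (fun y => (ε + a y t0) * deriv (fun z => ρ z t0) y) x0 := by
          funext y
          simp only [slope_def_field, hdzero]
          ring
        rw [hfe] at ht2
        have hGval : deriv (fun y => (ε + a y t0) * deriv (fun z => ρ z t0) y) x0
            = (ε + a x0 t0) * deriv (deriv (fun z => ρ z t0)) x0 :=
          tendsto_nhds_unique ht1 ht2
        have hGnn : 0 ≤ deriv (fun y => (ε + a y t0) * deriv (fun z => ρ z t0) y) x0 := by
          rw [hGval]
          exact mul_nonneg (by linarith [hapos x0 hx0 t0 ht0T]) hd2nn
        have hsplit : deriv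
            (fun y => (ε + a y t0) * deriv (fun z => ρ z t0) y + b y t0 * ρ y t0) x0
            = deriv (fun y => (ε + a y t0) * deriv (fun z => ρ z t0) y) x0
              + deriv (fun y => b y t0 * ρ y t0) x0 := deriv_add hGd hhd
        have hmulder : deriv (fun y => b y t0 * ρ y t0) x0
            = deriv (fun y => b y t0) x0 * ρ x0 t0 + b x0 t0 * deriv (fun y => ρ y t0) x0 :=
          deriv_mul hbx0 hgx0
        have hb'bd : -B' ≤ deriv (fun y => b y t0) x0 :=
          (abs_le.mp (hB'b x0 hx0 t0 ht0T)).1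
        have hder2 : deriv (fun y => ρ y t0) x0 = 0 := hdzero
        rw [hρeq, hder2, mul_zero, add_zero] at hmulder
        have hmb : -B' * δ ≤ deriv (fun y => b y t0) x0 * δ :=
          mul_le_mul_of_nonneg_right hb'bd hδpos.le
        rw [hsplit, hmulder]
        linarith
      · rw [deriv_zero_of_not_differentiableAt hFd]
        have : 0 ≤ B' * δ := mul_nonneg hB' hδpos.le
        linarith
    have hcx : c x0 t0 ≤ Cc := hcB x0 hx0 t0 ht0T
    have hcx0 : 0 ≤ c x0 t0 := hcpos x0 hx0 t0 ht0T
    have hfx : ε ≤ f x0 t0 := hfε x0 hx0 t0 ht0T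
    rw [hρeq] at hPDE0
    have hcd : c x0 t0 * δ ≤ Cc * δ := mul_le_mul_of_nonneg_right hcx hδpos.le
    linarith [hδpos, hdt, hPDE0, hdivF, hcd, hfx, hδ1]
end

section
/- There exists a universal constant C₂ > 0 such that for every integer l ≥ 1 and every μ > 0 there exists a constant C(l, μ) ≥ 0 with the following property: every nonnegative continuously differentiable function θ on [0,1] satisfies (max_{x∈[0,1]} θ(x))^{l+3/2} ≤ C₂ ∫₀¹ θ^{l+3/2} dx + C(l, μ) ∫₀¹ θ^{(l+1)(2l+3)/(2l+1)} dx + μ ∫₀¹ θ^{l−1} (θ')² dx. -/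
open Set Filter MeasureTheory Topology

private lemma gn_amgm {μ : ℝ} (hμ : 0 < μ) (a b : ℝ) :
    a * b ≤ μ * a ^ 2 + b ^ 2 / (4 * μ) := by
  have h : a * b - μ * a ^ 2 ≤ b ^ 2 / (4 * μ) := by
    rw [le_div_iff₀ (by positivity)]
    nlinarith [sq_nonneg (2 * μ * a - b)]
  linarith

private lemma gn_young (l : ℕ) (K t : ℝ) (hK : 0 ≤ K) (ht : 0 ≤ t) :
    K * t ^ ((l : ℝ) + 2) ≤
      t ^ ((l : ℝ) + 3 / 2) +
        K ^ ((2 * (l : ℝ) + 3) / (2 * (l : ℝ) + 1)) *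
          t ^ ((((l : ℝ) + 1) * (2 * (l : ℝ) + 3)) / (2 * (l : ℝ) + 1)) := by
  have hL : (0:ℝ) ≤ (l : ℝ) := Nat.cast_nonneg l
  have hd1 : (0:ℝ) < 2 * (l : ℝ) + 3 := by linarith
  have hd2 : (0:ℝ) < 2 * (l : ℝ) + 1 := by linarith
  have hq0 : (0:ℝ) < (((l : ℝ) + 1) * (2 * (l : ℝ) + 3)) / (2 * (l : ℝ) + 1) := by positivity
  have hC : (0:ℝ) ≤ K ^ ((2 * (l : ℝ) + 3) / (2 * (l : ℝ) + 1)) := Real.rpow_nonneg hK _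
  rcases eq_or_lt_of_le ht with h0 | h0
  · rw [← h0, Real.zero_rpow (by positivity : ((l:ℝ) + 2) ≠ 0),
      Real.zero_rpow (by positivity : ((l:ℝ) + 3/2) ≠ 0),
      Real.zero_rpow (ne_of_gt hq0)]
    simp
  · have htp : (0:ℝ) ≤ t ^ ((l : ℝ) + 3 / 2) := Real.rpow_nonneg ht _
    have htq : (0:ℝ) ≤ t ^ ((((l : ℝ) + 1) * (2 * (l : ℝ) + 3)) / (2 * (l : ℝ) + 1)) :=
      Real.rpow_nonneg ht _
    have hw₁ : (0:ℝ) ≤ 2 / (2 * (l : ℝ) + 3) := by positivity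
    have hw₂ : (0:ℝ) ≤ (2 * (l : ℝ) + 1) / (2 * (l : ℝ) + 3) := by positivity
    have hw : 2 / (2 * (l : ℝ) + 3) + (2 * (l : ℝ) + 1) / (2 * (l : ℝ) + 3) = 1 := by
      field_simp
      ring
    have hgm := Real.geom_mean_le_arith_mean2_weighted hw₁ hw₂ htp
      (mul_nonneg hC htq) hw
    have hkey : (t ^ ((l : ℝ) + 3 / 2)) ^ (2 / (2 * (l : ℝ) + 3)) *
        (K ^ ((2 * (l : ℝ) + 3) / (2 * (l : ℝ) + 1)) *
          t ^ ((((l : ℝ) + 1) * (2 * (l : ℝ) + 3)) / (2 * (l : ℝ) + 1))) ^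
            ((2 * (l : ℝ) + 1) / (2 * (l : ℝ) + 3))
        = K * t ^ ((l : ℝ) + 2) := by
      rw [Real.mul_rpow hC htq, ← Real.rpow_mul ht, ← Real.rpow_mul ht, ← Real.rpow_mul hK]
      have e1 : ((l : ℝ) + 3 / 2) * (2 / (2 * (l : ℝ) + 3)) = 1 := by
        field_simp
      have e2 : (2 * (l : ℝ) + 3) / (2 * (l : ℝ) + 1) * ((2 * (l : ℝ) + 1) / (2 * (l : ℝ) + 3))
          = 1 := by
        field_simp
      have e3 : (((l : ℝ) + 1) * (2 * (l : ℝ) + 3)) / (2 * (l : ℝ) + 1) *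
          ((2 * (l : ℝ) + 1) / (2 * (l : ℝ) + 3)) = (l : ℝ) + 1 := by
        field_simp
      rw [e1, e2, e3, Real.rpow_one, Real.rpow_one,
        show ((l : ℝ) + 2) = ((l : ℝ) + 1) + 1 by ring, Real.rpow_add h0, Real.rpow_one,
        Real.rpow_add h0, Real.rpow_add h0, Real.rpow_one]
      ring
    rw [hkey] at hgm
    have hb1 : 2 / (2 * (l : ℝ) + 3) * t ^ ((l : ℝ) + 3 / 2) ≤ t ^ ((l : ℝ) + 3 / 2) := by
      have : 2 / (2 * (l : ℝ) + 3) ≤ 1 := by rw [div_le_one hd1]; linarith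
      nlinarith
    have hb2 : (2 * (l : ℝ) + 1) / (2 * (l : ℝ) + 3) *
        (K ^ ((2 * (l : ℝ) + 3) / (2 * (l : ℝ) + 1)) *
          t ^ ((((l : ℝ) + 1) * (2 * (l : ℝ) + 3)) / (2 * (l : ℝ) + 1)))
        ≤ K ^ ((2 * (l : ℝ) + 3) / (2 * (l : ℝ) + 1)) *
          t ^ ((((l : ℝ) + 1) * (2 * (l : ℝ) + 3)) / (2 * (l : ℝ) + 1)) := by
      have h1 : (2 * (l : ℝ) + 1) / (2 * (l : ℝ) + 3) ≤ 1 := by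
        rw [div_le_one hd1]; linarith
      nlinarith [mul_nonneg hC htq]
    linarith

private lemma gn_pointwise (l : ℕ) (hl : 1 ≤ l) {μ : ℝ} (hμ : 0 < μ) (v t : ℝ) (ht : 0 ≤ t) :
    |v * ((l : ℝ) + 3 / 2) * t ^ ((l : ℝ) + 3 / 2 - 1)| ≤
      μ * (t ^ (l - 1) * v ^ 2) +
        (((l : ℝ) + 3 / 2) ^ 2 / (4 * μ)) * t ^ ((l : ℝ) + 2) := by
  have hL1 : (1:ℝ) ≤ (l : ℝ) := by exact_mod_cast hl
  have hp0 : (0:ℝ) ≤ (l : ℝ) + 3 / 2 := by linarith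
  have hsplit : t ^ ((l : ℝ) + 3 / 2 - 1)
      = t ^ (((l : ℝ) - 1) / 2) * t ^ (((l : ℝ) + 2) / 2) := by
    rw [show (l : ℝ) + 3 / 2 - 1 = ((l : ℝ) - 1) / 2 + ((l : ℝ) + 2) / 2 by ring]
    exact Real.rpow_add' ht (by intro h; nlinarith)
  have hA2 : (t ^ (((l : ℝ) - 1) / 2)) ^ 2 = t ^ (l - 1) := by
    rw [← Real.rpow_natCast (t ^ (((l : ℝ) - 1) / 2)) 2, ← Real.rpow_mul ht,
      ← Real.rpow_natCast t (l - 1)]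
    congr 1
    rw [Nat.cast_sub hl]
    push_cast
    ring
  have hB2 : (t ^ (((l : ℝ) + 2) / 2)) ^ 2 = t ^ ((l : ℝ) + 2) := by
    rw [← Real.rpow_natCast (t ^ (((l : ℝ) + 2) / 2)) 2, ← Real.rpow_mul ht]
    norm_num
  calc |v * ((l : ℝ) + 3 / 2) * t ^ ((l : ℝ) + 3 / 2 - 1)|
      = (t ^ (((l : ℝ) - 1) / 2) * |v|) * (((l : ℝ) + 3 / 2) * t ^ (((l : ℝ) + 2) / 2)) := by
        rw [abs_mul, abs_mul, abs_of_nonneg hp0,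
          abs_of_nonneg (Real.rpow_nonneg ht _), hsplit]
        ring
    _ ≤ μ * (t ^ (((l : ℝ) - 1) / 2) * |v|) ^ 2
        + (((l : ℝ) + 3 / 2) * t ^ (((l : ℝ) + 2) / 2)) ^ 2 / (4 * μ) := gn_amgm hμ _ _
    _ = μ * (t ^ (l - 1) * v ^ 2) +
        (((l : ℝ) + 3 / 2) ^ 2 / (4 * μ)) * t ^ ((l : ℝ) + 2) := by
        rw [mul_pow, mul_pow, hA2, hB2, sq_abs]
        ring

theorem gagliardo_nirenberg_power_interpolation :
    ∃ C₂ : ℝ, 0 < C₂ ∧ ∀ l : ℕ, 1 ≤ l → ∀ μ : ℝ, 0 < μ →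
      ∃ C : ℝ, 0 ≤ C ∧ ∀ θ : ℝ → ℝ,
        ContDiffOn ℝ 1 θ (Set.Icc 0 1) →
        (∀ x ∈ Set.Icc (0:ℝ) 1, 0 ≤ θ x) →
        (sSup (θ '' Set.Icc 0 1)) ^ ((l : ℝ) + 3 / 2)
          ≤ C₂ * (∫ x in (0:ℝ)..1, θ x ^ ((l : ℝ) + 3 / 2))
            + C * (∫ x in (0:ℝ)..1,
                θ x ^ ((((l : ℝ) + 1) * (2 * (l : ℝ) + 3)) / (2 * (l : ℝ) + 1)))
            + μ * (∫ x in (0:ℝ)..1, θ x ^ (l - 1) * (deriv θ x) ^ 2) := by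
  refine ⟨2, by norm_num, ?_⟩
  intro l hl μ hμ
  have hl1 : (1:ℝ) ≤ (l : ℝ) := by exact_mod_cast hl
  set p : ℝ := (l : ℝ) + 3 / 2 with hpdef
  set q : ℝ := (((l : ℝ) + 1) * (2 * (l : ℝ) + 3)) / (2 * (l : ℝ) + 1) with hqdef
  set K : ℝ := p ^ 2 / (4 * μ) with hKdef
  have hK0 : 0 ≤ K := by rw [hKdef]; positivity
  set C : ℝ := K ^ ((2 * (l : ℝ) + 3) / (2 * (l : ℝ) + 1)) with hCdef
  have hC0 : 0 ≤ C := Real.rpow_nonneg hK0 _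
  refine ⟨C, hC0, ?_⟩
  intro θ hθ hθ0
  have hp0 : (0:ℝ) ≤ p := by rw [hpdef]; linarith
  have hp1 : (1:ℝ) ≤ p := by rw [hpdef]; linarith
  have hq0 : (0:ℝ) ≤ q := by rw [hqdef]; positivity
  have hI : Set.uIcc (0:ℝ) 1 = Set.Icc 0 1 := uIcc_of_le zero_le_one
  have intInt : ∀ {f : ℝ → ℝ}, ContinuousOn f (Set.Icc 0 1) →
      IntervalIntegrable f volume 0 1 := fun hf => (hI ▸ hf).intervalIntegrable
  have hc : ContinuousOn θ (Set.Icc 0 1) := hθ.continuousOn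
  set φ : ℝ → ℝ := derivWithin θ (Set.Icc 0 1) with hφdef
  have hφc : ContinuousOn φ (Set.Icc 0 1) :=
    hθ.continuousOn_derivWithin (uniqueDiffOn_Icc one_pos) le_rfl
  have hdθ : ∀ x ∈ Set.Ioo (0:ℝ) 1, HasDerivAt θ (φ x) x := by
    intro x hx
    have hmem : Set.Icc (0:ℝ) 1 ∈ 𝓝 x := Icc_mem_nhds hx.1 hx.2
    exact ((hθ.differentiableOn one_ne_zero x (Set.Ioo_subset_Icc_self hx)).hasDerivWithinAt).hasDerivAt
      hmem
  set G : ℝ → ℝ := fun x => φ x * p * θ x ^ (p - 1) with hGdef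
  have hθp1c : ContinuousOn (fun x => θ x ^ (p - 1)) (Set.Icc 0 1) :=
    hc.rpow_const fun x _ => Or.inr (by linarith)
  have hGc : ContinuousOn G (Set.Icc 0 1) := by
    rw [hGdef]; exact (hφc.mul continuousOn_const).mul hθp1c
  have hθpc : ContinuousOn (fun x => θ x ^ p) (Set.Icc 0 1) :=
    hc.rpow_const fun x _ => Or.inr hp0
  have hθqc : ContinuousOn (fun x => θ x ^ q) (Set.Icc 0 1) :=
    hc.rpow_const fun x _ => Or.inr hq0
  have hf3c : ContinuousOn (fun x => θ x ^ (l - 1) * φ x ^ 2) (Set.Icc 0 1) :=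
    (hc.pow _).mul (hφc.pow 2)
  obtain ⟨xM, hxM, hmax⟩ := isCompact_Icc.exists_isMaxOn (Set.nonempty_Icc.mpr zero_le_one) hc
  obtain ⟨xm, hxm, hmin⟩ := isCompact_Icc.exists_isMinOn (Set.nonempty_Icc.mpr zero_le_one) hc
  have hsup : sSup (θ '' Set.Icc 0 1) = θ xM := by
    refine IsGreatest.csSup_eq ⟨Set.mem_image_of_mem θ hxM, ?_⟩
    rintro y ⟨x, hx, rfl⟩
    exact hmax hx
  -- FTC bound
  have hftc : θ xM ^ p ≤ θ xm ^ p + ∫ x in (0:ℝ)..1, |G x| := by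
    have key : ∀ a ∈ Set.Icc (0:ℝ) 1, ∀ b ∈ Set.Icc (0:ℝ) 1, a ≤ b →
        |θ b ^ p - θ a ^ p| ≤ ∫ x in (0:ℝ)..1, |G x| := by
      intro a ha b hb hab
      have hsub : Set.Icc a b ⊆ Set.Icc (0:ℝ) 1 := Set.Icc_subset_Icc ha.1 hb.2
      have hsub' : Set.uIcc a b ⊆ Set.Icc (0:ℝ) 1 := by rw [uIcc_of_le hab]; exact hsub
      have hGint : IntervalIntegrable G volume a b := (hGc.mono hsub').intervalIntegrable
      have heq : ∫ x in a..b, G x = θ b ^ p - θ a ^ p := by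
        have hd : ∀ x ∈ Set.Ioo a b, HasDerivWithinAt (fun y => θ y ^ p) (G x) (Set.Ioi x) x := by
          intro x hx
          have hx' : x ∈ Set.Ioo (0:ℝ) 1 :=
            ⟨lt_of_le_of_lt ha.1 hx.1, lt_of_lt_of_le hx.2 hb.2⟩
          exact (((hdθ x hx').rpow_const (Or.inr hp1))).hasDerivWithinAt
        exact intervalIntegral.integral_eq_sub_of_hasDeriv_right_of_le hab
          (hθpc.mono hsub) hd hGint
      rw [← heq]
      calc |∫ x in a..b, G x| ≤ ∫ x in a..b, |G x| :=
            intervalIntegral.abs_integral_le_integral_abs hab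
        _ ≤ ∫ x in (0:ℝ)..1, |G x| :=
            intervalIntegral.integral_mono_interval ha.1 hab hb.2
              (Filter.Eventually.of_forall fun x => abs_nonneg _) (intInt hGc.abs)
    rcases le_total xm xM with h | h
    · have h1 := key xm hxm xM hxM h
      have h2 := le_abs_self (θ xM ^ p - θ xm ^ p)
      linarith
    · have h1 := key xM hxM xm hxm h
      rw [abs_sub_comm] at h1
      have h2 := le_abs_self (θ xM ^ p - θ xm ^ p)
      linarith
  have hmin_avg : θ xm ^ p ≤ ∫ x in (0:ℝ)..1, θ x ^ p := by
    have h0 : ∫ _x in (0:ℝ)..1, θ xm ^ p = θ xm ^ p := by simp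
    rw [← h0]
    refine intervalIntegral.integral_mono_on zero_le_one intervalIntegrable_const
      (intInt hθpc) ?_
    intro x hx
    exact Real.rpow_le_rpow (hθ0 xm hxm) (hmin hx) hp0
  have hGbound : ∀ x ∈ Set.Icc (0:ℝ) 1,
      |G x| ≤ μ * (θ x ^ (l - 1) * φ x ^ 2) + (θ x ^ p + C * θ x ^ q) := by
    intro x hx
    have h1 := gn_pointwise l hl hμ (φ x) (θ x) (hθ0 x hx)
    have h2 := gn_young l K (θ x) hK0 (hθ0 x hx)
    rw [← hpdef] at h1
    rw [← hKdef] at h1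
    rw [← hpdef, ← hqdef, ← hCdef] at h2
    have hGx : G x = φ x * p * θ x ^ (p - 1) := by rw [hGdef]
    rw [hGx]
    linarith
  have hsplit : (∫ x in (0:ℝ)..1,
        (μ * (θ x ^ (l - 1) * φ x ^ 2) + (θ x ^ p + C * θ x ^ q)))
      = μ * (∫ x in (0:ℝ)..1, θ x ^ (l - 1) * φ x ^ 2)
        + ((∫ x in (0:ℝ)..1, θ x ^ p) + C * ∫ x in (0:ℝ)..1, θ x ^ q) := by
    rw [intervalIntegral.integral_add ((intInt hf3c).const_mul μ)
        ((intInt hθpc).add ((intInt hθqc).const_mul C)),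
      intervalIntegral.integral_add (intInt hθpc) ((intInt hθqc).const_mul C),
      intervalIntegral.integral_const_mul, intervalIntegral.integral_const_mul]
  have hGint_bound : (∫ x in (0:ℝ)..1, |G x|)
      ≤ μ * (∫ x in (0:ℝ)..1, θ x ^ (l - 1) * φ x ^ 2)
        + ((∫ x in (0:ℝ)..1, θ x ^ p) + C * ∫ x in (0:ℝ)..1, θ x ^ q) := by
    rw [← hsplit]
    refine intervalIntegral.integral_mono_on zero_le_one (intInt hGc.abs)
      (intInt (((continuousOn_const.mul hf3c).add
        (hθpc.add (continuousOn_const.mul hθqc))))) hGbound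
  have hderiv_eq : (∫ x in (0:ℝ)..1, θ x ^ (l - 1) * (deriv θ x) ^ 2)
      = ∫ x in (0:ℝ)..1, θ x ^ (l - 1) * φ x ^ 2 := by
    apply intervalIntegral.integral_congr_ae
    have h1 : ∀ᵐ x : ℝ, x ≠ 1 := by
      refine MeasureTheory.ae_iff.mpr ?_
      simp only [ne_eq, not_not, Set.setOf_eq_eq_singleton]
      exact Real.volume_singleton
    filter_upwards [h1] with x hx hmem
    rw [Set.uIoc_of_le zero_le_one] at hmem
    have hx' : x ∈ Set.Ioo (0:ℝ) 1 := ⟨hmem.1, lt_of_le_of_ne hmem.2 hx⟩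
    rw [(hdθ x hx').deriv]
  rw [hsup, hderiv_eq]
  linarith
end
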